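/- Let (G, D_G) be a simple Dirac Lie group (G a simple Lie group). Then either D_G is the graph of the vector bundle morphism T*G → TG induced by a multiplicative bivector field on G, or D_G = TG ⊕ {0}. -/

import Mathlib

open scoped Manifold
noncomputable section
namespace DiracPaper

section LagrGen
variable {V : Type*} [NormedAddCommGroup V] [NormedSpace ℝ V]

/-- A subspace of `V ⊕ V*` is Lagrangian if it coincides with its orthogonal for the
canonical pairing `⟨(x,ξ),(y,η)⟩ = ξ(y) + η(x)`. -/
def IsLagr (D : Submodule ℝ (V × (V →L[ℝ] ℝ))) : Prop :=
  ∀ p : V × (V →L[ℝ] ℝ), p ∈ D ↔ ∀ q ∈ D, p.2 q.1 + q.2 p.1 = 0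

end LagrGen

variable {E : Type*} [NormedAddCommGroup E] [NormedSpace ℝ E]
variable {G : Type*} [TopologicalSpace G] [ChartedSpace E G] [Group G] [LieGroup 𝓘(ℝ, E) (⊤ : ℕ∞) G]

/-- The differential of left translation `L_g` at the point `h` (all tangent spaces being
identified with the model space `E`). -/
def dL (g h : G) : E →L[ℝ] E := mfderiv 𝓘(ℝ, E) 𝓘(ℝ, E) (fun x => g * x) h

/-- The differential of right translation `R_h` at the point `g`. -/
def dR (h g : G) : E →L[ℝ] E := mfderiv 𝓘(ℝ, E) 𝓘(ℝ, E) (fun x => x * h) g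

/-- The differential at the neutral element of a real valued function on `G`. -/
def d1 (f : G → ℝ) : E →L[ℝ] ℝ := mfderiv 𝓘(ℝ, E) 𝓘(ℝ, ℝ) f (1 : G)

/-- The left invariant vector field associated to `x ∈ 𝔤 = T_e G`. -/
def xL (x : E) (g : G) : E := dL g 1 x

/-- The left invariant one-form associated to `ξ ∈ 𝔤*`: `ξ^L(g) = (T_g L_{g⁻¹})^* ξ`. -/
def leftForm (ξ : E →L[ℝ] ℝ) (g : G) : E →L[ℝ] ℝ := ξ.comp (dL g⁻¹ g)

/-- The right invariant one-form associated to `ξ ∈ 𝔤*`: `ξ^R(g) = (T_g R_{g⁻¹})^* ξ`. -/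
def rightForm (ξ : E →L[ℝ] ℝ) (g : G) : E →L[ℝ] ℝ := ξ.comp (dR g⁻¹ g)

/-- The adjoint action of `G` on `𝔤 = T_e G`. -/
def Ad (g : G) : E →L[ℝ] E := mfderiv 𝓘(ℝ, E) 𝓘(ℝ, E) (fun x => g * x * g⁻¹) 1

variable (G) in
/-- The adjoint action of `𝔤` on itself, obtained by differentiating `Ad` at `e`;
`adCLM G x y = ⁅x, y⁆`. -/
def adCLM : E →L[ℝ] E →L[ℝ] E :=
  mfderiv 𝓘(ℝ, E) 𝓘(ℝ, E →L[ℝ] E) (Ad : G → (E →L[ℝ] E)) 1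

variable (G) in
/-- The Lie bracket on `𝔤 = T_e G`. -/
def bra (x y : E) : E := adCLM G x y

variable (G) in
/-- The coadjoint action: `(coadW G x ξ) y = ξ ⁅y, x⁆`, i.e. `ad_x^* ξ`. -/
def coadW (x : E) (ξ : E →L[ℝ] ℝ) : E →L[ℝ] ℝ := ξ.comp ((adCLM G).flip x)


/-- Multiplicativity of a field of subspaces `D(g) ⊆ T_g G ⊕ T_g^* G`: group multiplication
is a forward Dirac map. -/
def MultDirac (D : G → Submodule ℝ (E × (E →L[ℝ] ℝ))) : Prop :=
  ∀ g h : G, ∀ p ∈ D (g * h), ∃ w u : E, ∃ β γ : E →L[ℝ] ℝ,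
    (w, β) ∈ D g ∧ (u, γ) ∈ D h ∧ dR h g w + dL g h u = p.1 ∧
    β = p.2.comp (dR h g) ∧ γ = p.2.comp (dL g h)

/-- `𝔤₀ = G₀(e)`, the kernel of the Dirac structure at the neutral element. -/
def g0set (D : G → Submodule ℝ (E × (E →L[ℝ] ℝ))) : Set E := {x | (x, 0) ∈ D 1}

/-- `𝔭₁ = P₁(e)`, the characteristic codistribution at the neutral element. -/
def p1set (D : G → Submodule ℝ (E × (E →L[ℝ] ℝ))) : Set (E →L[ℝ] ℝ) :=
  {ξ | ∃ x, (x, ξ) ∈ D 1}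

/-- A smooth vector field `X = X_ξ` such that `(X_ξ, ξ^L)` is a section of `D`. -/
def SmoothSec (D : G → Submodule ℝ (E × (E →L[ℝ] ℝ))) (ξ : E →L[ℝ] ℝ) (X : G → E) : Prop :=
  ContMDiff 𝓘(ℝ, E) 𝓘(ℝ, E) (⊤ : ℕ∞) X ∧ ∀ g, (X g, leftForm ξ g) ∈ D g

/-- `p1br η X_ξ = [ξ, η] = d_e (η^L (X_ξ))`, the bracket of `ξ, η ∈ 𝔭₁` computed with a
choice of vector field `X_ξ`. -/
def p1br (η : E →L[ℝ] ℝ) (X : G → E) : E →L[ℝ] ℝ := d1 (fun g => leftForm η g (X g))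

/-- `z ∈ 𝔤` represents `ad_η^* x ∈ 𝔤/𝔤₀ = 𝔭₁^*`, which is defined by
`(ad_η^* x)(θ) = [θ, η](x)`. -/
def RepAdStar (D : G → Submodule ℝ (E × (E →L[ℝ] ℝ))) (η : E →L[ℝ] ℝ) (x z : E) : Prop :=
  ∀ θ ∈ p1set D, ∀ Xθ : G → E, SmoothSec D θ Xθ → θ z = p1br η Xθ x

/-- A one-parameter subgroup `c` of `G` with derivative `x` at `0` (playing the role of
`t ↦ exp (t x)`). -/
def OneParam (c : ℝ → G) (x : E) : Prop :=
  ContMDiff 𝓘(ℝ, ℝ) 𝓘(ℝ, E) (⊤ : ℕ∞) c ∧ c 0 = 1 ∧ (∀ s t : ℝ, c (s + t) = c s * c t) ∧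
    (id (mfderiv 𝓘(ℝ, ℝ) 𝓘(ℝ, E) c 0 (1 : ℝ)) : E) = x

section Courant

variable {F : Type*} [NormedAddCommGroup F] [NormedSpace ℝ F]
variable {M : Type*} [TopologicalSpace M] [ChartedSpace F M]

/-- The Lie bracket of two vector fields, computed in the trivialization of the tangent
bundle given by the identification `TangentSpace 𝓘(ℝ,F) m = F`. -/
def vLie (X Y : M → F) (m : M) : F :=
  (id (mfderiv 𝓘(ℝ, F) 𝓘(ℝ, F) Y m (X m)) : F) -
    (id (mfderiv 𝓘(ℝ, F) 𝓘(ℝ, F) X m (Y m)) : F)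

/-- The Lie derivative `£_X β` of a one-form `β` along a vector field `X`, in the same
trivialization. -/
def lieDform (X : M → F) (β : M → (F →L[ℝ] ℝ)) (m : M) : F →L[ℝ] ℝ :=
  (id (mfderiv 𝓘(ℝ, F) 𝓘(ℝ, F →L[ℝ] ℝ) β m (X m)) : F →L[ℝ] ℝ) +
    (β m).comp (id (mfderiv 𝓘(ℝ, F) 𝓘(ℝ, F) X m) : F →L[ℝ] F)

/-- The contraction `i_Y dα`, in the same trivialization. -/
def iotaDform (Y : M → F) (α : M → (F →L[ℝ] ℝ)) (m : M) : F →L[ℝ] ℝ :=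
  (id (mfderiv 𝓘(ℝ, F) 𝓘(ℝ, F →L[ℝ] ℝ) α m (Y m)) : F →L[ℝ] ℝ) -
    (id (mfderiv 𝓘(ℝ, F) 𝓘(ℝ, F →L[ℝ] ℝ) α m) : F →L[ℝ] (F →L[ℝ] ℝ)).flip (Y m)

/-- Integrability of a Dirac structure: closure of the space of smooth sections under the
Courant–Dorfman bracket `[(X,α),(Y,β)] = ([X,Y], £_X β − i_Y dα)`. -/
def CourantClosed (D : M → Submodule ℝ (F × (F →L[ℝ] ℝ))) : Prop :=
  ∀ (X Y : M → F) (α β : M → (F →L[ℝ] ℝ)),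
    ContMDiff 𝓘(ℝ, F) 𝓘(ℝ, F) (⊤ : ℕ∞) X → ContMDiff 𝓘(ℝ, F) 𝓘(ℝ, F →L[ℝ] ℝ) (⊤ : ℕ∞) α →
    ContMDiff 𝓘(ℝ, F) 𝓘(ℝ, F) (⊤ : ℕ∞) Y → ContMDiff 𝓘(ℝ, F) 𝓘(ℝ, F →L[ℝ] ℝ) (⊤ : ℕ∞) β →
    (∀ m, (X m, α m) ∈ D m) → (∀ m, (Y m, β m) ∈ D m) →
    ∀ m, (vLie X Y m, lieDform X β m - iotaDform Y α m) ∈ D m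

end Courant

lemma mdiffL (g : G) : MDifferentiable 𝓘(ℝ,E) 𝓘(ℝ,E) (fun x : G => g * x) :=
  (contMDiff_mul_left (n := ((⊤ : ℕ∞) : WithTop ℕ∞))).mdifferentiable (by simp)
lemma mdiffR (g : G) : MDifferentiable 𝓘(ℝ,E) 𝓘(ℝ,E) (fun x : G => x * g) :=
  (contMDiff_mul_right (n := ((⊤ : ℕ∞) : WithTop ℕ∞))).mdifferentiable (by simp)

lemma dL_comp (a b h : G) (v : E) : dL a (b*h) (dL b h v) = dL (a*b) h v := by
  have h2 := mfderiv_comp (I := 𝓘(ℝ,E)) (I' := 𝓘(ℝ,E)) (I'' := 𝓘(ℝ,E)) h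
    ((mdiffL a) ((fun x : G => b * x) h)) ((mdiffL b) h)
  have h1 : ((fun x : G => a * x) ∘ (fun x : G => b * x)) = (fun x : G => (a*b) * x) := by
    funext x; simp [Function.comp, mul_assoc]
  rw [h1] at h2
  simp only [dL]; rw [h2]; rfl

lemma dR_comp (a b g : G) (v : E) : dR b (g*a) (dR a g v) = dR (a*b) g v := by
  have h2 := mfderiv_comp (I := 𝓘(ℝ,E)) (I' := 𝓘(ℝ,E)) (I'' := 𝓘(ℝ,E)) g
    ((mdiffR b) ((fun x : G => x * a) g)) ((mdiffR a) g)
  have h1 : ((fun x : G => x * b) ∘ (fun x : G => x * a)) = (fun x : G => x * (a*b)) := by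
    funext x; simp [Function.comp, mul_assoc]
  rw [h1] at h2
  simp only [dR]; rw [h2]; rfl

lemma dL_one (g : G) (v : E) : dL 1 g v = v := by
  have h1 : (fun x : G => (1:G) * x) = id := funext one_mul
  rw [dL, h1, mfderiv_id]; rfl

lemma dR_one (g : G) (v : E) : dR 1 g v = v := by
  have h1 : (fun x : G => x * (1:G)) = id := funext mul_one
  rw [dR, h1, mfderiv_id]; rfl

lemma dL_cancel₁ (g : G) (v : E) : dL g⁻¹ g (dL g 1 v) = v := by
  have := dL_comp g⁻¹ g 1 v
  simp only [mul_one, inv_mul_cancel] at this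
  rw [this, dL_one]

lemma dL_cancel₂ (g : G) (v : E) : dL g 1 (dL g⁻¹ g v) = v := by
  have := dL_comp g g⁻¹ g v
  simp only [inv_mul_cancel, mul_inv_cancel] at this
  rw [this, dL_one]

lemma dR_cancel (g : G) (v : E) : dR g 1 (dR g⁻¹ g v) = v := by
  have := dR_comp g⁻¹ g g v
  simp only [mul_inv_cancel, inv_mul_cancel] at this
  rw [this, dR_one]

lemma Ad_eq (g : G) (v : E) : Ad g v = dR g⁻¹ g (dL g 1 v) := by
  have h2 := mfderiv_comp (I := 𝓘(ℝ,E)) (I' := 𝓘(ℝ,E)) (I'' := 𝓘(ℝ,E)) (1:G)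
    ((mdiffR g⁻¹) ((fun x : G => g * x) 1)) ((mdiffL g) 1)
  have h1 : ((fun x : G => x * g⁻¹) ∘ (fun x : G => g * x)) = (fun x : G => g * x * g⁻¹) := by
    funext x; simp [Function.comp]
  rw [h1] at h2
  have h3 : (Ad g : E →L[ℝ] E) = (dR g⁻¹ (g*1)).comp (dL g 1) := h2
  rw [mul_one] at h3
  rw [h3]; rfl

lemma fderiv_mem_of_mem {E' : Type*} [NormedAddCommGroup E'] [NormedSpace ℝ E']
    {f : E' → E} {f' : E' →L[ℝ] E} {S : Submodule ℝ E} (hS : IsClosed (S : Set E))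
    {x₀ : E'} (hd : HasFDerivAt f f' x₀) (hf : ∀ x, f x ∈ S) (v : E') : f' v ∈ S := by
  have hline : HasDerivAt (fun t : ℝ => x₀ + t • v) v 0 := by
    simpa using ((hasDerivAt_id (0:ℝ)).smul_const v).const_add x₀
  have hg : HasDerivAt (fun t : ℝ => f (x₀ + t • v)) (f' v) 0 :=
    HasFDerivAt.comp_hasDerivAt 0 (by simpa using hd) hline
  have ht := hasDerivAt_iff_tendsto_slope.mp hg
  refine hS.mem_of_tendsto ht (Filter.Eventually.of_forall fun t => ?_)
  simp only [slope]
  exact S.smul_mem _ (S.sub_mem (hf _) (hf _))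

lemma mfderiv_mem_of_mem {F : G → E} {S : Submodule ℝ E} (hS : IsClosed (S : Set E))
    (g₀ : G) (hF : MDifferentiableAt 𝓘(ℝ,E) 𝓘(ℝ,E) F g₀) (hmem : ∀ g, F g ∈ S) (v : E) :
    mfderiv 𝓘(ℝ,E) 𝓘(ℝ,E) F g₀ v ∈ S := by
  have hr : Set.range (𝓘(ℝ,E) : E → E) = Set.univ := by
    rw [modelWithCornersSelf_coe, Set.range_id]
  have h1 := hF.hasMFDerivAt.2
  rw [hr] at h1
  have h2 : HasFDerivAt (writtenInExtChartAt 𝓘(ℝ,E) 𝓘(ℝ,E) g₀ F)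
      (mfderiv 𝓘(ℝ,E) 𝓘(ℝ,E) F g₀ : E →L[ℝ] E) ((extChartAt 𝓘(ℝ,E) g₀) g₀) :=
    hasFDerivWithinAt_univ.mp h1
  refine fderiv_mem_of_mem hS h2 (fun x => ?_) v
  simp only [writtenInExtChartAt, extChartAt_model_space_eq_id, Function.comp,
    PartialEquiv.refl_coe, id_eq]
  exact hmem _

lemma bra_eq (hAd : MDifferentiableAt 𝓘(ℝ,E) 𝓘(ℝ, E →L[ℝ] E) (Ad : G → (E →L[ℝ] E)) 1)
    (x y : E) : bra G x y = mfderiv 𝓘(ℝ,E) 𝓘(ℝ,E) (fun g : G => Ad g y) 1 x := by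
  have hL : MDifferentiableAt 𝓘(ℝ, E →L[ℝ] E) 𝓘(ℝ,E)
      (fun f : E →L[ℝ] E => ContinuousLinearMap.apply ℝ E y f) (Ad (1:G)) :=
    (ContinuousLinearMap.apply ℝ E y).differentiable.differentiableAt.mdifferentiableAt
  have hc := mfderiv_comp (I := 𝓘(ℝ,E)) (I' := 𝓘(ℝ, E →L[ℝ] E)) (I'' := 𝓘(ℝ,E)) (1:G) hL hAd
  have he : mfderiv 𝓘(ℝ, E →L[ℝ] E) 𝓘(ℝ,E) (fun f : E →L[ℝ] E =>
      ContinuousLinearMap.apply ℝ E y f) (Ad (1:G)) = ContinuousLinearMap.apply ℝ E y := by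
    rw [mfderiv_eq_fderiv]
    exact (ContinuousLinearMap.apply ℝ E y).fderiv
  rw [he] at hc
  have hfun : ((fun f : E →L[ℝ] E => ContinuousLinearMap.apply ℝ E y f) ∘ (Ad : G → _))
      = (fun g : G => Ad g y) := rfl
  rw [hfun] at hc
  rw [hc]
  rfl

section Dirac
variable (D : G → Submodule ℝ (E × (E →L[ℝ] ℝ))) (hLag : ∀ g : G, IsLagr (D g))
  (hMult : MultDirac D)

include hLag hMult in
lemma revMult (g h : G) (w u : E) (ξ : E →L[ℝ] ℝ)
    (hw : (w, ξ.comp (dR h g)) ∈ D g) (hu : (u, ξ.comp (dL g h)) ∈ D h) :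
    (dR h g w + dL g h u, ξ) ∈ D (g * h) := by
  refine (hLag (g*h) _).mpr ?_
  rintro q hq
  obtain ⟨w', u', β', γ', hw', hu', hsum, hβ, hγ⟩ := hMult g h q hq
  have h1 := (hLag g _).mp hw _ hw'
  have h2 := (hLag h _).mp hu _ hu'
  simp only [ContinuousLinearMap.comp_apply] at h1 h2
  have e1 : q.2 (dR h g w) = β' w := by rw [hβ]; rfl
  have e2 : q.2 (dL g h u) = γ' u := by rw [hγ]; rfl
  have e3 : ξ q.1 = ξ (dR h g w') + ξ (dL g h u') := by rw [← hsum, map_add]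
  simp only [map_add, e3]
  rw [e1, e2]
  linarith

include hLag hMult in
lemma mem_ker_of_g0 (g : G) (x : E) (hx : (x, (0:E →L[ℝ] ℝ)) ∈ D 1) :
    (dL g 1 x, (0:E →L[ℝ] ℝ)) ∈ D g := by
  have h := revMult D hLag hMult g 1 0 x 0 (by simp only [ContinuousLinearMap.zero_comp]; exact (D g).zero_mem) (by simpa using hx)
  simpa [mul_one] using h

include hLag hMult in
lemma g0_of_ker (g : G) (w : E) (hw : (w, (0:E →L[ℝ] ℝ)) ∈ D g) :
    (dL g⁻¹ g w, (0:E →L[ℝ] ℝ)) ∈ D 1 := by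
  have h := revMult D hLag hMult g⁻¹ g 0 w 0 (by simp only [ContinuousLinearMap.zero_comp]; exact (D g⁻¹).zero_mem) (by simpa using hw)
  simpa [inv_mul_cancel] using h

include hLag hMult in
lemma Ad_mem_g0 (g : G) (x : E) (hx : (x, (0:E →L[ℝ] ℝ)) ∈ D 1) :
    (Ad g x, (0:E →L[ℝ] ℝ)) ∈ D 1 := by
  have h1 := mem_ker_of_g0 D hLag hMult g x hx
  have h2 := revMult D hLag hMult g g⁻¹ (dL g 1 x) 0 0 (by simpa using h1)
    (by simp only [ContinuousLinearMap.zero_comp]; exact (D g⁻¹).zero_mem)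
  rw [show Ad g x = dR g⁻¹ g (dL g 1 x) from Ad_eq g x]
  simpa [mul_inv_cancel] using h2

variable (G) in
/-- `𝔤₀` as a submodule, described as the annihilator of `𝔭₁`. -/
def g0S : Submodule ℝ E where
  carrier := {x | ∀ q ∈ D (1:G), q.2 x = 0}
  add_mem' := fun ha hb q hq => by rw [map_add, ha q hq, hb q hq, add_zero]
  zero_mem' := fun q hq => map_zero q.2
  smul_mem' := fun c x hx q hq => by rw [map_smul, hx q hq, smul_zero]

lemma g0S_closed : IsClosed ((g0S G D : Submodule ℝ E) : Set E) := by
  have : ((g0S G D : Submodule ℝ E) : Set E) = ⋂ q ∈ D (1:G), {x : E | q.2 x = 0} := by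
    ext x; simp [g0S]
  rw [this]
  exact isClosed_biInter fun q _ => isClosed_eq q.2.continuous continuous_const

include hLag in
lemma mem_g0S_iff (x : E) : x ∈ g0S G D ↔ (x, (0:E →L[ℝ] ℝ)) ∈ D 1 := by
  constructor
  · intro hx
    refine (hLag 1 _).mpr fun q hq => ?_
    simp [hx q hq]
  · intro hx q hq
    have := (hLag 1 _).mp hx q hq
    simpa using this

end Dirac


/-!
STATEMENT 5: for a simple Dirac Lie group `(G, D_G)`, either `D_G` is the graph of the
bundle map `T^*G → TG` induced by a multiplicative bivector field on `G`, or
`D_G = TG ⊕ {0}`.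
-/
theorem simple_dirac_lie_group_dichotomy
    (D : G → Submodule ℝ (E × (E →L[ℝ] ℝ)))
    (hLag : ∀ g : G, IsLagr (D g)) (hMult : MultDirac D)
    (hsimple₁ : ∀ I : Submodule ℝ E, (∀ x : E, ∀ y ∈ I, bra G x y ∈ I) → I = ⊥ ∨ I = ⊤)
    (hsimple₂ : ∃ x y : E, bra G x y ≠ 0) :
    (∃ π : G → ((E →L[ℝ] ℝ) →ₗ[ℝ] E),
      (∀ (g : G) (ξ η : E →L[ℝ] ℝ), ξ (π g η) = - η (π g ξ)) ∧
      (∀ (g h : G) (ξ : E →L[ℝ] ℝ),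
        π (g * h) ξ = dR h g (π g (ξ.comp (dR h g))) + dL g h (π h (ξ.comp (dL g h)))) ∧
      (∀ (g : G) (p : E × (E →L[ℝ] ℝ)), p ∈ D g ↔ p.1 = π g p.2)) ∨
    (∀ (g : G) (p : E × (E →L[ℝ] ℝ)), p ∈ D g ↔ p.2 = 0) := by
  classical
  have hAdDiff : MDifferentiableAt 𝓘(ℝ,E) 𝓘(ℝ, E →L[ℝ] E) (Ad : G → (E →L[ℝ] E)) 1 := by
    by_contra hc
    obtain ⟨x, y, hxy⟩ := hsimple₂
    refine hxy ?_
    rw [bra, adCLM, mfderiv_zero_of_not_mdifferentiableAt hc]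
    show ((0 : E →L[ℝ] (E →L[ℝ] E)) x) y = 0
    simp
  have hideal : ∀ (x : E), ∀ y ∈ g0S G D, bra G x y ∈ g0S G D := by
    intro x y hy
    have hmem : ∀ g : G, Ad g y ∈ g0S G D := fun g =>
      (mem_g0S_iff D hLag _).mpr (Ad_mem_g0 D hLag hMult g y ((mem_g0S_iff D hLag _).mp hy))
    have hL : MDifferentiableAt 𝓘(ℝ, E →L[ℝ] E) 𝓘(ℝ,E)
        (fun f : E →L[ℝ] E => ContinuousLinearMap.apply ℝ E y f) (Ad (1:G)) :=
      (ContinuousLinearMap.apply ℝ E y).differentiable.differentiableAt.mdifferentiableAt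
    have hF : MDifferentiableAt 𝓘(ℝ,E) 𝓘(ℝ,E) (fun g : G => Ad g y) 1 :=
      MDifferentiableAt.comp (1:G) hL hAdDiff
    rw [bra_eq hAdDiff]
    exact mfderiv_mem_of_mem (g0S_closed D) 1 hF hmem x
  rcases hsimple₁ (g0S G D) hideal with hbot | htop
  · -- 𝔤₀ = 0 : D is the graph of a bivector
    left
    have hker : ∀ g : G, ∀ v : E, (v, (0:E→L[ℝ]ℝ)) ∈ D g → v = 0 := by
      intro g v hv
      have h1 := g0_of_ker D hLag hMult g v hv
      have h2 : dL g⁻¹ g v ∈ g0S G D := (mem_g0S_iff D hLag _).mpr h1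
      rw [hbot] at h2
      have h3 : dL g⁻¹ g v = 0 := h2
      have h4 := dL_cancel₂ g v
      rw [h3, map_zero] at h4
      exact h4.symm
    have huniq : ∀ g : G, ∀ v v' : E, ∀ ξ : E →L[ℝ] ℝ,
        (v, ξ) ∈ D g → (v', ξ) ∈ D g → v = v' := by
      intro g v v' ξ h1 h2
      have h3 : ((v,ξ) - (v',ξ) : E × (E→L[ℝ]ℝ)) ∈ D g := (D g).sub_mem h1 h2
      have h4 : (v - v', (0:E→L[ℝ]ℝ)) ∈ D g := by
        simpa [Prod.mk_sub_mk] using h3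
      exact sub_eq_zero.mp (hker g _ h4)
    have hpr1 : ∀ v : E, ∀ ξ : E →L[ℝ] ℝ, (v, ξ) ∈ D 1 → v = 0 := by
      intro v ξ hv
      have e1 : ξ.comp (dR (1:G) 1) = ξ := by ext w; simp [dR_one]
      have e2 : ξ.comp (dL (1:G) 1) = ξ := by ext w; simp [dL_one]
      have h := revMult D hLag hMult 1 1 v v ξ (by rw [e1]; exact hv) (by rw [e2]; exact hv)
      have h2 : (v + v, ξ) ∈ D 1 := by
        simpa [dR_one, dL_one] using h
      have h3 : ((v + v, ξ) - (v, ξ) : E × (E→L[ℝ]ℝ)) ∈ D 1 := (D 1).sub_mem h2 hv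
      have h4 : (v, (0:E→L[ℝ]ℝ)) ∈ D 1 := by simpa [Prod.mk_sub_mk] using h3
      exact hker 1 v h4
    have hzero : ∀ ξ : E →L[ℝ] ℝ, ((0:E), ξ) ∈ D 1 := by
      intro ξ
      refine (hLag 1 _).mpr fun q hq => ?_
      have : q.1 = 0 := hpr1 q.1 q.2 (by simpa using hq)
      simp [this]
    have htot : ∀ (g : G) (ξ : E →L[ℝ] ℝ), ∃ v, (v, ξ) ∈ D g := by
      intro g ξ
      have h1 : ((0:E), ξ.comp (dR g 1)) ∈ D (g * g⁻¹) := by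
        rw [mul_inv_cancel]; exact hzero _
      obtain ⟨w, u, β, γ, hw, hu, hsum, hβ, hγ⟩ := hMult g g⁻¹ _ h1
      refine ⟨w, ?_⟩
      have hβξ : β = ξ := by
        rw [hβ]; ext v
        simp only [ContinuousLinearMap.comp_apply]
        rw [dR_cancel]
      rwa [hβξ] at hw
    choose f hf using htot
    have hadd : ∀ (g : G) (ξ η : E →L[ℝ] ℝ), f g (ξ + η) = f g ξ + f g η := by
      intro g ξ η
      refine huniq g _ _ (ξ + η) (hf g (ξ + η)) ?_
      have := (D g).add_mem (hf g ξ) (hf g η)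
      simpa [Prod.mk_add_mk] using this
    have hsmul : ∀ (g : G) (c : ℝ) (ξ : E →L[ℝ] ℝ), f g (c • ξ) = c • f g ξ := by
      intro g c ξ
      refine huniq g _ _ (c • ξ) (hf g (c • ξ)) ?_
      have := (D g).smul_mem c (hf g ξ)
      simpa [Prod.smul_mk] using this
    refine ⟨fun g => ⟨⟨f g, hadd g⟩, hsmul g⟩, ?_, ?_, ?_⟩
    · intro g ξ η
      simp only [LinearMap.coe_mk, AddHom.coe_mk]
      have := (hLag g _).mp (hf g ξ) _ (hf g η)
      simp only at this
      linarith
    · intro g h ξ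
      simp only [LinearMap.coe_mk, AddHom.coe_mk]
      obtain ⟨w, u, β, γ, hw, hu, hsum, hβ, hγ⟩ := hMult g h _ (hf (g*h) ξ)
      simp only at hβ hγ hsum
      rw [hβ] at hw
      rw [hγ] at hu
      have hww : w = f g (ξ.comp (dR h g)) := huniq g _ _ _ hw (hf g _)
      have huu : u = f h (ξ.comp (dL g h)) := huniq h _ _ _ hu (hf h _)
      rw [← hww, ← huu, hsum]
    · rintro g ⟨v, ξ⟩
      simp only [LinearMap.coe_mk, AddHom.coe_mk]
      constructor
      · intro hp
        have h3 : ((v, ξ) - (f g ξ, ξ) : E × (E→L[ℝ]ℝ)) ∈ D g := (D g).sub_mem hp (hf g ξ)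
        have h4 : (v - f g ξ, (0:E→L[ℝ]ℝ)) ∈ D g := by simpa [Prod.mk_sub_mk] using h3
        exact sub_eq_zero.mp (hker g _ h4)
      · intro hp
        rw [hp]
        exact hf g ξ
  · -- 𝔤₀ = 𝔤 : D = TG ⊕ 0
    right
    have h1 : ∀ q ∈ D (1:G), q.2 = (0:E→L[ℝ]ℝ) := by
      intro q hq; ext x
      have hx : x ∈ g0S G D := htop.symm ▸ Submodule.mem_top
      simpa using hx q hq
    have hq20 : ∀ g : G, ∀ p ∈ D g, p.2 = (0 : E →L[ℝ] ℝ) := by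
      intro g p hp
      have hp' : p ∈ D (g * 1) := by rwa [mul_one]
      obtain ⟨w, u, β, γ, hw, hu, hsum, hβ, hγ⟩ := hMult g 1 p hp'
      have hγ0 : γ = 0 := h1 _ hu
      have hcomp : p.2.comp (dL g 1) = 0 := by rw [← hγ, hγ0]
      ext v
      have h5 : p.2 (dL g 1 (dL g⁻¹ g v)) = 0 := by
        calc p.2 (dL g 1 (dL g⁻¹ g v)) = (p.2.comp (dL g 1)) (dL g⁻¹ g v) := rfl
        _ = 0 := by rw [hcomp]; rfl
      rw [dL_cancel₂] at h5
      simpa using h5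
    intro g p
    constructor
    · exact fun hp => hq20 g p hp
    · intro hp2
      refine (hLag g p).mpr fun q hq => ?_
      rw [hp2, hq20 g q hq]
      simp


end DiracPaper
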